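/- arXiv:1806.02553 — 2 statements merged into one kernel-verified Lean document; each statement's English description precedes it below -/
import Mathlib

section
/- Let 2 < p < ∞ be real and let r satisfy 1/r = 1/2 + 1/p. For every m ∈ ℕ and all nonnegative real scalars λ_1, …, λ_m, there exist n ∈ ℕ and continuous linear functionals x_1*, …, x_n* on ℓ_p such that sup_{‖x‖ ≤ 1} ∑_{k=1}^n |x_k*(x)| ≤ 1 and ∑_{k=1}^n ∑_{i=1}^m λ_i |x_k*(e_i)| ≥ (∑_{i=1}^m λ_i^r)^{1/r}. -/
open Finset
open scoped ENNReal

noncomputable def sg (b : Bool) : ℝ := if b then 1 else -1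

lemma sg_mul_self (b : Bool) : sg b * sg b = 1 := by cases b <;> simp [sg]
lemma abs_sg (b : Bool) : |sg b| = 1 := by cases b <;> simp [sg]
lemma sg_not (b : Bool) : sg (!b) = - sg b := by cases b <;> simp [sg]

lemma sum_sg_mul_eq_zero {m : ℕ} {i j : Fin m} (hij : i ≠ j) :
    ∑ ε : Fin m → Bool, sg (ε i) * sg (ε j) = 0 := by
  classical
  set g : (Fin m → Bool) → (Fin m → Bool) := fun ε => Function.update ε j (!(ε j)) with hgdef
  have hg : Function.Involutive g := by
    intro ε; funext k
    by_cases hk : k = j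
    · subst hk; simp [g]
    · simp [g, Function.update_of_ne hk]
  have h1 : ∑ ε : Fin m → Bool, sg ((g ε) i) * sg ((g ε) j)
      = ∑ ε : Fin m → Bool, sg (ε i) * sg (ε j) :=
    Fintype.sum_bijective g hg.bijective _ _ (fun ε => rfl)
  have h2 : ∀ ε : Fin m → Bool, sg ((g ε) i) * sg ((g ε) j) = -(sg (ε i) * sg (ε j)) := by
    intro ε
    simp only [g, Function.update_of_ne hij, Function.update_self, sg_not]
    ring
  simp_rw [h2] at h1
  rw [Finset.sum_neg_distrib] at h1
  linarith

lemma sum_sg_mul {m : ℕ} (i j : Fin m) :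
    ∑ ε : Fin m → Bool, sg (ε i) * sg (ε j) = if i = j then (2:ℝ)^m else 0 := by
  by_cases h : i = j
  · subst h
    simp only [sg_mul_self, Finset.sum_const, Finset.card_univ, nsmul_eq_mul, mul_one, if_pos rfl]
    simp [Fintype.card_fun]
  · rw [if_neg h]; exact sum_sg_mul_eq_zero h

lemma sum_sq_expand {m : ℕ} (c : Fin m → ℝ) :
    ∑ ε : Fin m → Bool, (∑ i, sg (ε i) * c i)^2 = (2:ℝ)^m * ∑ i, (c i)^2 := by
  have h0 : ∀ ε : Fin m → Bool, (∑ i, sg (ε i) * c i)^2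
      = ∑ i, ∑ j, (c i * c j) * (sg (ε i) * sg (ε j)) := by
    intro ε
    rw [sq, Finset.sum_mul_sum]
    exact Finset.sum_congr rfl fun i _ => Finset.sum_congr rfl fun j _ => by ring
  simp_rw [h0]
  rw [Finset.sum_comm]
  have h1 : ∀ i : Fin m, (∑ ε : Fin m → Bool, ∑ j, (c i * c j) * (sg (ε i) * sg (ε j)))
      = (2:ℝ)^m * (c i)^2 := by
    intro i
    rw [Finset.sum_comm]
    have h2 : ∀ j : Fin m, (∑ ε : Fin m → Bool, (c i * c j) * (sg (ε i) * sg (ε j)))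
        = (c i * c j) * (if i = j then (2:ℝ)^m else 0) := by
      intro j; rw [← Finset.mul_sum, sum_sg_mul]
    simp_rw [h2]
    rw [Finset.sum_eq_single i]
    · rw [if_pos rfl]; ring
    · intro j _ hji; rw [if_neg (Ne.symm hji), mul_zero]
    · intro h; exact absurd (Finset.mem_univ i) h
  simp_rw [h1]
  rw [← Finset.mul_sum]

noncomputable def coordCLM (P : ℝ≥0∞) [Fact (1 ≤ P)] (i : ℕ) :
    lp (fun _ : ℕ => ℝ) P →L[ℝ] ℝ :=
  LinearMap.mkContinuous
    { toFun := fun x => x i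
      map_add' := fun x y => by simp only []; rw [show ((x+y : lp (fun _ : ℕ => ℝ) P) : ℕ → ℝ) = (x:ℕ→ℝ)+(y:ℕ→ℝ) from lp.coeFn_add x y]; rfl
      map_smul' := fun a x => by simp only []; rw [show ((a • x : lp (fun _ : ℕ => ℝ) P) : ℕ → ℝ) = a • (x:ℕ→ℝ) from lp.coeFn_smul a x]; rfl }
    1 (fun x => by
      rw [one_mul]
      exact lp.norm_apply_le_norm (zero_lt_one.trans_le (Fact.out : 1 ≤ P)).ne' x i)

@[simp] lemma coordCLM_apply (P : ℝ≥0∞) [Fact (1 ≤ P)] (i : ℕ) (x : lp (fun _ : ℕ => ℝ) P) :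
    coordCLM P i x = x i := rfl

set_option maxHeartbeats 1000000 in
/-- **Theorem 3.3, lower estimate.** For `2 < p < ∞` and `1/r = 1/2 + 1/p`, and nonnegative
scalars `λ_1, …, λ_m`, there exist functionals `x_1*, …, x_n*` on `ℓ_p` with
`sup_{‖x‖≤1} ∑_k |x_k*(x)| ≤ 1` and `∑_k ∑_i λ_i |x_k*(e_i)| ≥ (∑_i λ_i^r)^(1/r)`.
This witnesses the estimate `‖∑ λ_i |δ_{e_i}|‖_{FBL[ℓ_p]} ≥ (∑ λ_i^r)^(1/r)` via the
explicit formula for the free Banach lattice norm. -/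
theorem fbl_lp_abs_lower (p r : ℝ) (hp : 2 < p) (hr : 1 / r = 1 / 2 + 1 / p)
    [Fact (1 ≤ ENNReal.ofReal p)]
    (m : ℕ) (lam : Fin m → ℝ) (hlam : ∀ i, 0 ≤ lam i) :
    ∃ (n : ℕ) (xs : Fin n → (lp (fun _ : ℕ => ℝ) (ENNReal.ofReal p) →L[ℝ] ℝ)),
      (∀ x, ‖x‖ ≤ 1 → ∑ k, |xs k x| ≤ 1) ∧
      (∑ i, lam i ^ r) ^ (1 / r) ≤
        ∑ k, ∑ i, lam i * |xs k (lp.single (ENNReal.ofReal p) (i : ℕ) (1 : ℝ))| := by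
  classical
  set P := ENNReal.ofReal p with hPdef
  have hp0 : (0:ℝ) < p := by linarith
  have hp2 : (0:ℝ) < p - 2 := by linarith
  have hrpos : 0 < r := by
    have h1 : 0 < 1/r := by rw [hr]; positivity
    exact one_div_pos.mp h1
  have hr0 : r ≠ 0 := hrpos.ne'
  have hrinv0 : 1/r ≠ 0 := (one_div_pos.mpr hrpos).ne'
  have hTnn : 0 ≤ ∑ i, lam i ^ r := Finset.sum_nonneg fun i _ => Real.rpow_nonneg (hlam i) r
  by_cases hT : (∑ i, lam i ^ r) = 0
  · refine ⟨0, fun k => 0, ?_, ?_⟩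
    · intro x _; simp
    · rw [hT, Real.zero_rpow hrinv0]; simp
  have hTpos : 0 < ∑ i, lam i ^ r := hTnn.lt_of_ne (Ne.symm hT)
  have hkey : 2 * p = p * r + 2 * r := by
    field_simp at hr
    linarith
  have hr1 : 1 < r := by nlinarith
  set s : ℝ := 2*p/(p-2) with hsdef
  have hs0 : 0 < s := by positivity
  have hrs : (r - 1) * s = r := by
    rw [hsdef]; field_simp; nlinarith
  have hinv : 1 - 1/s = 1/r := by
    rw [hr, hsdef]; field_simp; ring
  have hconj : Real.HolderConjugate (s/2) (p/2) := by
    rw [Real.holderConjugate_iff]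
    constructor
    · rw [hsdef, lt_div_iff₀ (by norm_num : (0:ℝ) < 2), one_mul, lt_div_iff₀ hp2]
      linarith
    · rw [hsdef]; field_simp; ring
  set T := ∑ i, lam i ^ r with hTdef
  set μ : Fin m → ℝ := fun i => lam i ^ (r-1) / T ^ (1/s) with hμdef
  have hμnn : ∀ i, 0 ≤ μ i := fun i =>
    div_nonneg (Real.rpow_nonneg (hlam i) _) (Real.rpow_nonneg hTnn _)
  have hμs : ∑ i, μ i ^ s = 1 := by
    have hi : ∀ i : Fin m, μ i ^ s = lam i ^ r / T := by
      intro i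
      rw [hμdef]
      simp only []
      rw [Real.div_rpow (Real.rpow_nonneg (hlam i) _) (Real.rpow_nonneg hTnn _),
        ← Real.rpow_mul (hlam i), hrs, ← Real.rpow_mul hTnn,
        one_div_mul_cancel hs0.ne', Real.rpow_one]
    simp_rw [hi]
    rw [← Finset.sum_div, div_self hT]
  have hlamμ : ∑ i, lam i * μ i = T ^ (1/r) := by
    have hi : ∀ i : Fin m, lam i * μ i = lam i ^ r / T ^ (1/s) := by
      intro i
      rw [hμdef]
      simp only []
      rw [← mul_div_assoc]
      congr 1
      have h := Real.rpow_one_add' (hlam i) (y := r - 1) (by ring_nf; exact hr0)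
      rw [show (1:ℝ) + (r-1) = r by ring] at h
      exact h.symm
    simp_rw [hi]
    rw [← Finset.sum_div, ← hTdef]
    nth_rewrite 1 [← Real.rpow_one T]
    rw [← Real.rpow_sub hTpos, hinv]
  set c : ℝ := ((2:ℝ)^m)⁻¹ with hcdef
  have hc0 : 0 < c := by positivity
  set F : (Fin m → Bool) → (lp (fun _ : ℕ => ℝ) P →L[ℝ] ℝ) :=
    fun ε => c • ∑ i : Fin m, (sg (ε i) * μ i) • coordCLM P (i : ℕ) with hFdef
  have hFapp : ∀ (ε : Fin m → Bool) (x : lp (fun _ : ℕ => ℝ) P),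
      F ε x = c * ∑ i : Fin m, sg (ε i) * (μ i * x (i:ℕ)) := by
    intro ε x
    rw [hFdef]
    simp only [ContinuousLinearMap.smul_apply, ContinuousLinearMap.sum_apply,
      ContinuousLinearMap.coe_smul', Pi.smul_apply, coordCLM_apply, smul_eq_mul]
    congr 1
    exact Finset.sum_congr rfl fun i _ => by ring
  have hcard : Fintype.card (Fin m → Bool) = 2 ^ m := by
    simp [Fintype.card_fun]
  let e : Fin (2^m) ≃ (Fin m → Bool) := (Fintype.equivFinOfCardEq hcard).symm
  refine ⟨2^m, fun k => F (e k), ?_, ?_⟩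
  · intro x hx
    have hre : ∑ k : Fin (2^m), |F (e k) x| = ∑ ε : Fin m → Bool, |F ε x| :=
      Equiv.sum_comp e (fun ε => |F ε x|)
    rw [hre]
    set S : (Fin m → Bool) → ℝ := fun ε => ∑ i : Fin m, sg (ε i) * (μ i * x (i:ℕ)) with hSdef
    have h1 : ∑ ε : Fin m → Bool, |F ε x| = c * ∑ ε : Fin m → Bool, |S ε| := by
      rw [Finset.mul_sum]
      exact Finset.sum_congr rfl fun ε _ => by rw [hFapp, abs_mul, abs_of_pos hc0]
    have hxp : ∑ i : Fin m, |x (i:ℕ)| ^ p ≤ 1 := by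
      have hPt : P.toReal = p := ENNReal.toReal_ofReal hp0.le
      have h2 := lp.sum_rpow_le_norm_rpow (p := P) (by rw [hPt]; exact hp0) x (Finset.range m)
      rw [hPt] at h2
      have h3 : (‖x‖ : ℝ) ^ p ≤ 1 := Real.rpow_le_one (norm_nonneg x) hx hp0.le
      have h4 : ∑ i : Fin m, |x (i:ℕ)| ^ p = ∑ j ∈ Finset.range m, ‖x j‖ ^ p := by
        rw [← Fin.sum_univ_eq_sum_range (fun j => ‖x j‖ ^ p) m]
        exact Finset.sum_congr rfl fun i _ => by rw [Real.norm_eq_abs]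
      linarith
    have hB : ∑ i : Fin m, (μ i * x (i:ℕ))^2 ≤ 1 := by
      have e1 : ∀ i : Fin m, ((μ i)^2 : ℝ) ^ (s/2) = μ i ^ s := by
        intro i
        rw [← Real.rpow_natCast (μ i) 2, ← Real.rpow_mul (hμnn i)]
        congr 1
        push_cast; ring
      have e2 : ∀ i : Fin m, ((x (i:ℕ))^2 : ℝ) ^ (p/2) = |x (i:ℕ)| ^ p := by
        intro i
        rw [← sq_abs, ← Real.rpow_natCast |x (i:ℕ)| 2, ← Real.rpow_mul (abs_nonneg _)]
        congr 1
        push_cast; ring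
      have hhold := Real.inner_le_Lp_mul_Lq_of_nonneg (s := Finset.univ)
        (f := fun i : Fin m => (μ i)^2) (g := fun i : Fin m => (x (i:ℕ))^2) hconj
        (fun i _ => sq_nonneg _) (fun i _ => sq_nonneg _)
      simp only [e1, e2] at hhold
      rw [hμs, Real.one_rpow, one_mul] at hhold
      have h6 : (∑ i : Fin m, |x (i:ℕ)| ^ p) ^ (1/(p/2)) ≤ 1 :=
        Real.rpow_le_one (Finset.sum_nonneg fun i _ => Real.rpow_nonneg (abs_nonneg _) _)
          hxp (by positivity)
      calc ∑ i : Fin m, (μ i * x (i:ℕ))^2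
          = ∑ i : Fin m, (μ i)^2 * (x (i:ℕ))^2 := by
            exact Finset.sum_congr rfl fun i _ => by ring
        _ ≤ (∑ i : Fin m, |x (i:ℕ)| ^ p) ^ (1/(p/2)) := hhold
        _ ≤ 1 := h6
    have h2 : (∑ ε : Fin m → Bool, |S ε|)^2 ≤ (2:ℝ)^m * ∑ ε : Fin m → Bool, (S ε)^2 := by
      have h7 := sq_sum_le_card_mul_sum_sq
        (s := (Finset.univ : Finset (Fin m → Bool))) (f := fun ε => |S ε|)
      simp only [sq_abs, Finset.card_univ, hcard] at h7
      calc (∑ ε : Fin m → Bool, |S ε|)^2 ≤ ((2^m : ℕ) : ℝ) * ∑ ε : Fin m → Bool, (S ε)^2 := h7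
        _ = (2:ℝ)^m * ∑ ε : Fin m → Bool, (S ε)^2 := by push_cast; ring
    have h3 : ∑ ε : Fin m → Bool, (S ε)^2 = (2:ℝ)^m * ∑ i : Fin m, (μ i * x (i:ℕ))^2 :=
      sum_sq_expand _
    have hA0 : 0 ≤ ∑ ε : Fin m → Bool, |S ε| := Finset.sum_nonneg fun ε _ => abs_nonneg _
    have hA2 : (∑ ε : Fin m → Bool, |S ε|)^2
        ≤ (2:ℝ)^m * ((2:ℝ)^m * ∑ i : Fin m, (μ i * x (i:ℕ))^2) := by
      rw [← h3]; exact h2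
    have hc2 : c * (2:ℝ)^m = 1 := inv_mul_cancel₀ (by positivity)
    rw [h1]
    set A := ∑ ε : Fin m → Bool, |S ε| with hAdef
    have h5 : (c*A)^2 ≤ 1 := by
      calc (c*A)^2 = c^2 * A^2 := by ring
        _ ≤ c^2 * ((2:ℝ)^m * ((2:ℝ)^m * ∑ i : Fin m, (μ i * x (i:ℕ))^2)) :=
          mul_le_mul_of_nonneg_left hA2 (sq_nonneg c)
        _ = (c * 2^m) * (c * 2^m) * ∑ i : Fin m, (μ i * x (i:ℕ))^2 := by ring
        _ = ∑ i : Fin m, (μ i * x (i:ℕ))^2 := by rw [hc2]; ring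
        _ ≤ 1 := hB
    nlinarith [h5, mul_nonneg hc0.le hA0]
  · have hre : ∑ k : Fin (2^m), ∑ i, lam i * |F (e k) (lp.single P (i:ℕ) (1:ℝ))|
        = ∑ ε : Fin m → Bool, ∑ i, lam i * |F ε (lp.single P (i:ℕ) (1:ℝ))| :=
      Equiv.sum_comp e (fun ε => ∑ i, lam i * |F ε (lp.single P (i:ℕ) (1:ℝ))|)
    rw [hre]
    have hFs : ∀ (ε : Fin m → Bool) (i : Fin m),
        F ε (lp.single P (i:ℕ) (1:ℝ)) = c * (sg (ε i) * μ i) := by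
      intro ε i
      rw [hFapp]
      congr 1
      rw [Finset.sum_eq_single i]
      · rw [lp.single_apply_self]
        ring
      · intro j _ hji
        rw [lp.single_apply_ne P (i:ℕ) _ (fun h => hji (Fin.val_injective h))]
        ring
      · intro h; exact absurd (Finset.mem_univ i) h
    have habs : ∀ (ε : Fin m → Bool) (i : Fin m),
        |F ε (lp.single P (i:ℕ) (1:ℝ))| = c * μ i := by
      intro ε i
      rw [hFs, abs_mul, abs_mul, abs_sg, abs_of_pos hc0, abs_of_nonneg (hμnn i)]
      ring
    have hc2 : c * (2:ℝ)^m = 1 := inv_mul_cancel₀ (by positivity)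
    simp_rw [habs]
    have hfinal : ∑ _ε : Fin m → Bool, ∑ i, lam i * (c * μ i) = T ^ (1/r) := by
      have h8 : ∑ i, lam i * (c * μ i) = c * ∑ i, lam i * μ i := by
        rw [Finset.mul_sum]; exact Finset.sum_congr rfl fun i _ => by ring
      rw [Finset.sum_const, Finset.card_univ, hcard, nsmul_eq_mul, h8, hlamμ]
      push_cast
      rw [← mul_assoc, mul_comm ((2:ℝ)^m) c, hc2, one_mul]
    rw [hfinal]
end

section
/- Let 2 < p < ∞ be real and let r satisfy 1/r = 1/2 + 1/p. Let X be a Banach lattice and let (x_n)_{n∈ℕ} be a sequence in X that is equivalent to the canonical basis of ℓ_p, i.e., there are constants c, C > 0 such that c (∑_{i=1}^m |λ_i|^p)^{1/p} ≤ ‖∑_{i=1}^m λ_i x_i‖ ≤ C (∑_{i=1}^m |λ_i|^p)^{1/p} for all m and all real scalars λ_1, …, λ_m. Then the sequence (|x_n|) satisfies an upper ℓ_r-estimate: there is a constant K > 0 such that ‖∑_{i=1}^m λ_i |x_i|‖ ≤ K (∑_{i=1}^m |λ_i|^r)^{1/r} for all m and all real scalars λ_1, …, λ_m. -/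
noncomputable def bsgn (b : Bool) : ℝ := cond b 1 (-1)

lemma sum_bool_decomp {M : Type*} [AddCommMonoid M] (m : ℕ) (f : (Fin (m+1) → Bool) → M) :
    ∑ ε : Fin (m+1) → Bool, f ε
      = ∑ ε : Fin m → Bool, (f (Fin.cons true ε) + f (Fin.cons false ε)) := by
  rw [← (Fin.consEquiv fun _ => Bool).sum_comp f]
  rw [Fintype.sum_prod_type]
  rw [Fintype.sum_bool]
  rw [← Finset.sum_add_distrib]
  rfl

lemma moment2 (m : ℕ) (a : Fin m → ℝ) :
    ∑ ε : Fin m → Bool, (∑ j, bsgn (ε j) * a j)^2 = 2^m * ∑ j, (a j)^2 := by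
  induction m with
  | zero => simp
  | succ m ih =>
    rw [sum_bool_decomp]
    have hconsV : ∀ (b : Bool) (ε : Fin m → Bool),
        (∑ j, bsgn ((Fin.cons b ε : Fin (m+1) → Bool) j) * a j)
          = bsgn b * a 0 + ∑ j, bsgn (ε j) * a (Fin.succ j) := by
      intro b ε
      rw [Fin.sum_univ_succ]
      simp [Fin.cons_succ]
    have : ∀ ε : Fin m → Bool,
        (∑ j, bsgn ((Fin.cons true ε : Fin (m+1) → Bool) j) * a j)^2 + (∑ j, bsgn ((Fin.cons false ε : Fin (m+1) → Bool) j) * a j)^2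
        = 2 * (a 0)^2 + 2 * (∑ j, bsgn (ε j) * a (Fin.succ j))^2 := by
      intro ε
      rw [hconsV true ε, hconsV false ε]
      simp only [bsgn, cond_true, cond_false]
      ring
    rw [Finset.sum_congr rfl fun ε _ => this ε, Finset.sum_add_distrib, Finset.sum_const,
      ← Finset.mul_sum, ih (fun j => a (Fin.succ j)), Fin.sum_univ_succ (fun j => (a j)^2)]
    simp only [Finset.card_univ, Fintype.card_fun, Fintype.card_bool, Fintype.card_fin,
      nsmul_eq_mul, Nat.cast_pow, Nat.cast_ofNat, pow_succ]
    ring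

lemma moment4 (m : ℕ) (a : Fin m → ℝ) :
    ∑ ε : Fin m → Bool, (∑ j, bsgn (ε j) * a j)^4
      = 3 * 2^m * (∑ j, (a j)^2)^2 - 2 * 2^m * ∑ j, (a j)^4 := by
  induction m with
  | zero => simp
  | succ m ih =>
    rw [sum_bool_decomp]
    have hconsV : ∀ (b : Bool) (ε : Fin m → Bool),
        (∑ j, bsgn ((Fin.cons b ε : Fin (m+1) → Bool) j) * a j)
          = bsgn b * a 0 + ∑ j, bsgn (ε j) * a (Fin.succ j) := by
      intro b ε
      rw [Fin.sum_univ_succ]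
      simp [Fin.cons_succ]
    have : ∀ ε : Fin m → Bool,
        (∑ j, bsgn ((Fin.cons true ε : Fin (m+1) → Bool) j) * a j)^4
          + (∑ j, bsgn ((Fin.cons false ε : Fin (m+1) → Bool) j) * a j)^4
        = (2 * (a 0)^4 + 6 * 2 * (a 0)^2 * (∑ j, bsgn (ε j) * a (Fin.succ j))^2)
            + 2 * (∑ j, bsgn (ε j) * a (Fin.succ j))^4 := by
      intro ε
      rw [hconsV true ε, hconsV false ε]
      simp only [bsgn, cond_true, cond_false]
      ring
    rw [Finset.sum_congr rfl fun ε _ => this ε, Finset.sum_add_distrib, Finset.sum_add_distrib,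
      Finset.sum_const, ← Finset.mul_sum, ← Finset.mul_sum,
      ih (fun j => a (Fin.succ j)), moment2 m (fun j => a (Fin.succ j)),
      Fin.sum_univ_succ (fun j => (a j)^2), Fin.sum_univ_succ (fun j => (a j)^4)]
    simp only [Finset.card_univ, Fintype.card_fun, Fintype.card_bool, Fintype.card_fin,
      nsmul_eq_mul, Nat.cast_pow, Nat.cast_ofNat, pow_succ]
    ring

lemma khintchine (m : ℕ) (a : Fin m → ℝ) :
    Real.sqrt (∑ j, (a j)^2)
      ≤ Real.sqrt 3 * (2^m : ℝ)⁻¹ * ∑ ε : Fin m → Bool, |∑ j, bsgn (ε j) * a j| := by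
  classical
  set V : (Fin m → Bool) → ℝ := fun ε => ∑ j, bsgn (ε j) * a j with hV
  set S : ℝ := ∑ j, (a j)^2 with hS
  have hS0 : 0 ≤ S := Finset.sum_nonneg fun j _ => sq_nonneg _
  set P : ℝ := ∑ ε : Fin m → Bool, |V ε| with hP
  have hP0 : 0 ≤ P := Finset.sum_nonneg fun ε _ => abs_nonneg _
  rcases eq_or_lt_of_le hS0 with h0 | hSpos
  · rw [← h0, Real.sqrt_zero]
    positivity
  -- moments
  have hQ : ∑ ε : Fin m → Bool, (V ε)^2 = 2^m * S := moment2 m a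
  have hR : ∑ ε : Fin m → Bool, (V ε)^4 ≤ 3 * 2^m * S^2 := by
    rw [moment4 m a]
    have : (0:ℝ) ≤ 2 * 2^m * ∑ j, (a j)^4 := by positivity
    linarith
  -- Cauchy-Schwarz twice
  have cs1 : (∑ ε : Fin m → Bool, (V ε)^2)^2 ≤ P * ∑ ε : Fin m → Bool, |V ε|^3 := by
    have := Finset.sum_mul_sq_le_sq_mul_sq Finset.univ
      (fun ε : Fin m → Bool => Real.sqrt |V ε|) (fun ε => |V ε| * Real.sqrt |V ε|)
    calc (∑ ε : Fin m → Bool, (V ε)^2)^2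
        = (∑ ε : Fin m → Bool, Real.sqrt |V ε| * (|V ε| * Real.sqrt |V ε|))^2 := by
          congr 1; apply Finset.sum_congr rfl; intro ε _
          rw [← mul_assoc, mul_comm (Real.sqrt _) (|V ε|), mul_assoc,
            Real.mul_self_sqrt (abs_nonneg _), ← sq_abs, sq]
      _ ≤ (∑ ε : Fin m → Bool, Real.sqrt |V ε|^2) * ∑ ε : Fin m → Bool, (|V ε| * Real.sqrt |V ε|)^2 := this
      _ = P * ∑ ε : Fin m → Bool, |V ε|^3 := by
          congr 1
          · apply Finset.sum_congr rfl; intro ε _; rw [Real.sq_sqrt (abs_nonneg _)]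
          · apply Finset.sum_congr rfl; intro ε _
            rw [mul_pow, Real.sq_sqrt (abs_nonneg _)]
            ring
  have cs2 : (∑ ε : Fin m → Bool, |V ε|^3)^2
      ≤ (∑ ε : Fin m → Bool, (V ε)^2) * ∑ ε : Fin m → Bool, (V ε)^4 := by
    have := Finset.sum_mul_sq_le_sq_mul_sq Finset.univ
      (fun ε : Fin m → Bool => |V ε|) (fun ε => (V ε)^2)
    calc (∑ ε : Fin m → Bool, |V ε|^3)^2
        = (∑ ε : Fin m → Bool, |V ε| * (V ε)^2)^2 := by
          congr 1; apply Finset.sum_congr rfl; intro ε _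
          rw [← sq_abs, pow_succ, mul_comm]
      _ ≤ (∑ ε : Fin m → Bool, |V ε|^2) * ∑ ε : Fin m → Bool, ((V ε)^2)^2 := this
      _ = (∑ ε : Fin m → Bool, (V ε)^2) * ∑ ε : Fin m → Bool, (V ε)^4 := by
          congr 1
          · apply Finset.sum_congr rfl; intro ε _; rw [sq_abs]
          · apply Finset.sum_congr rfl; intro ε _; ring
  -- combine: (2^m S)^3 ≤ 3 * 2^m * S^2 * P^2  ⇒  2^(2m) S ≤ 3 P^2
  have hT0 : 0 ≤ ∑ ε : Fin m → Bool, |V ε|^3 :=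
    Finset.sum_nonneg fun ε _ => by positivity
  have h2m : (0:ℝ) < 2^m := by positivity
  have hQT : ((2:ℝ)^m*S)^2 ≤ P * ∑ ε : Fin m → Bool, |V ε|^3 := by rw [← hQ]; exact cs1
  have hTQ : (∑ ε : Fin m → Bool, |V ε|^3)^2 ≤ ((2:ℝ)^m*S) * (3*2^m*S^2) := by
    refine cs2.trans ?_
    rw [hQ]
    exact mul_le_mul_of_nonneg_left hR (by positivity)
  have h4 : (((2:ℝ)^m*S)^2)^2 ≤ P^2 * (((2:ℝ)^m*S) * (3*2^m*S^2)) := by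
    calc (((2:ℝ)^m*S)^2)^2 ≤ (P * ∑ ε : Fin m → Bool, |V ε|^3)^2 :=
          pow_le_pow_left₀ (sq_nonneg _) hQT 2
      _ = P^2 * (∑ ε : Fin m → Bool, |V ε|^3)^2 := by ring
      _ ≤ P^2 * (((2:ℝ)^m*S) * (3*2^m*S^2)) :=
          mul_le_mul_of_nonneg_left hTQ (sq_nonneg P)
  have key : (2^m : ℝ)^2 * S ≤ 3 * P^2 := by
    nlinarith [h4, mul_pos (pow_pos h2m 2) (pow_pos hSpos 3)]
  -- take square roots
  have : S ≤ 3 * ((2^m : ℝ)⁻¹ * P)^2 := by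
    have h2 : (0:ℝ) < ((2:ℝ)^m)^2 := by positivity
    calc S = ((2^m : ℝ)^2 * S) / (2^m : ℝ)^2 := by field_simp
      _ ≤ (3 * P^2) / (2^m : ℝ)^2 := by gcongr
      _ = 3 * ((2^m : ℝ)⁻¹ * P)^2 := by field_simp
  calc Real.sqrt S ≤ Real.sqrt (3 * ((2^m : ℝ)⁻¹ * P)^2) := Real.sqrt_le_sqrt this
    _ = Real.sqrt 3 * ((2^m : ℝ)⁻¹ * P) := by
        rw [Real.sqrt_mul (by norm_num), Real.sqrt_sq (by positivity)]
    _ = Real.sqrt 3 * (2^m : ℝ)⁻¹ * P := by ring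


open scoped RealInnerProductSpace in
lemma decomp_lemma {ι : Type} [Fintype ι] {m : ℕ} (v : ι → Fin m → ℝ) (c : ι → ℝ)
    (hc : ∀ k, 0 ≤ c k) (u : Fin m → ℝ)
    (h : ∀ t : Fin m → ℝ, ∑ i, u i * t i ≤ ∑ k, c k * |∑ j, v k j * t j|) :
    ∃ a : ι → ℝ, (∀ k, |a k| ≤ c k) ∧ ∀ i, u i = ∑ k, a k * v k i := by
  classical
  set E := EuclideanSpace ℝ (Fin m) with hE
  let e : E ≃L[ℝ] (Fin m → ℝ) := EuclideanSpace.equiv (Fin m) ℝ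
  let L0 : (ι → ℝ) →ₗ[ℝ] (Fin m → ℝ) :=
    { toFun := fun a i => ∑ k, a k * v k i
      map_add' := by intro a b; funext i; simp [add_mul, Finset.sum_add_distrib]
      map_smul' := by intro r a; funext i; simp [Finset.mul_sum, mul_assoc] }
  let L : (ι → ℝ) →ₗ[ℝ] E := e.symm.toLinearEquiv.toLinearMap.comp L0
  let box : Set (ι → ℝ) := Set.univ.pi fun k => Set.Icc (-(c k)) (c k)
  have hboxc : IsCompact box := isCompact_univ_pi fun k => isCompact_Icc
  have hboxconv : Convex ℝ box := convex_pi fun k _ => convex_Icc _ _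
  have hK : IsCompact (L '' box) := hboxc.image L.continuous_of_finiteDimensional
  have hKc : Convex ℝ (L '' box) := hboxconv.linear_image L
  have hmem : e.symm u ∈ L '' box := by
    by_contra hu
    obtain ⟨f, s0, hfu, hfs⟩ := geometric_hahn_banach_point_closed hKc hK.isClosed hu
    set w : E := (InnerProductSpace.toDual ℝ E).symm f with hwdef
    have hfw : ∀ y : E, f y = ⟪w, y⟫ := by
      intro y
      rw [hwdef, InnerProductSpace.toDual_symm_apply]
    have hinner : ∀ z : Fin m → ℝ, f (e.symm z) = ∑ i, w i * z i := by
      intro z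
      rw [hfw]
      rw [PiLp.inner_apply]
      exact Finset.sum_congr rfl fun i _ => by simp [e, mul_comm]; exact Or.inl rfl
    -- the test vector
    set t : Fin m → ℝ := fun i => -(w i) with ht
    have htest := h t
    have h1 : ∑ i, u i * t i = -(f (e.symm u)) := by
      rw [hinner]
      rw [← Finset.sum_neg_distrib]
      apply Finset.sum_congr rfl
      intro i _
      simp [ht]; ring
    have h2 : ∀ k, |∑ j, v k j * t j| = |f (e.symm (v k))| := by
      intro k
      rw [hinner]
      rw [← abs_neg]
      congr 1
      rw [← Finset.sum_neg_distrib]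
      apply Finset.sum_congr rfl
      intro j _
      simp [ht]; ring
    -- the minimizing sign vector
    set aa : ι → ℝ := fun k => if 0 ≤ f (e.symm (v k)) then -(c k) else c k with haa
    have haabox : aa ∈ box := by
      intro k _
      simp only [haa, Set.mem_Icc]
      split_ifs
      · exact ⟨le_refl _, by linarith [hc k]⟩
      · exact ⟨by linarith [hc k], le_refl _⟩
    have hLaa : L aa = ∑ k, aa k • e.symm (v k) := by
      have : L0 aa = ∑ k, aa k • v k := by
        funext i
        simp [L0, Finset.sum_apply]
      show e.symm.toLinearEquiv.toLinearMap (L0 aa) = _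
      rw [this, map_sum]
      simp only [map_smul]
      rfl
    have hfLaa : f (L aa) = -∑ k, c k * |f (e.symm (v k))| := by
      rw [hLaa, map_sum, ← Finset.sum_neg_distrib]
      apply Finset.sum_congr rfl
      intro k _
      rw [map_smul, smul_eq_mul]
      by_cases hk : 0 ≤ f (e.symm (v k))
      · rw [haa]; simp only [hk, if_true, abs_of_nonneg hk]; ring
      · push_neg at hk
        rw [haa]; simp only [hk.not_ge, if_false, abs_of_neg hk]; ring
    have hb := hfs (L aa) ⟨aa, haabox, rfl⟩
    rw [hfLaa] at hb
    rw [h1] at htest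
    have htest' : -(f (e.symm u)) ≤ ∑ k, c k * |f (e.symm (v k))| := by
      refine htest.trans (le_of_eq ?_)
      exact Finset.sum_congr rfl fun k _ => by rw [h2 k]
    linarith
  obtain ⟨a, habox, hLa⟩ := hmem
  refine ⟨a, fun k => ?_, fun i => ?_⟩
  · have := habox k (Set.mem_univ k)
    rw [Set.mem_Icc] at this
    exact abs_le.mpr ⟨this.1, this.2⟩
  · have : L0 a = u := by
      have : e (L a) = e (e.symm u) := by rw [hLa]
      rwa [ContinuousLinearEquiv.apply_symm_apply] at this
    exact (congrFun this i).symm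


variable {X : Type} [NormedAddCommGroup X] [Lattice X] [HasSolidNorm X]
    [IsOrderedAddMonoid X] [NormedSpace ℝ X]

lemma dyadic_smul_nonneg {x : X} (hx : 0 ≤ x) (k j : ℕ) : 0 ≤ ((k : ℝ) / 2^j) • x := by
  induction j with
  | zero =>
    simp only [pow_zero, div_one, Nat.cast_smul_eq_nsmul]
    exact nsmul_nonneg hx k
  | succ j ih =>
    apply nsmul_two_semiclosed (α := X)
    have : (2 : ℕ) • (((k : ℝ) / 2^(j+1)) • x) = ((k : ℝ) / 2^j) • x := by
      rw [← Nat.cast_smul_eq_nsmul ℝ, smul_smul]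
      congr 1
      push_cast
      field_simp
      ring
    rw [this]
    exact ih

lemma real_smul_nonneg {r : ℝ} (hr : 0 ≤ r) {x : X} (hx : 0 ≤ x) : 0 ≤ r • x := by
  have htend : Filter.Tendsto (fun j : ℕ => ((⌊r * 2^j⌋₊ : ℝ) / 2^j) • x)
      Filter.atTop (nhds (r • x)) := by
    apply Filter.Tendsto.smul_const
    have h1 : Filter.Tendsto (fun y : ℝ => (⌊r * y⌋₊ : ℝ) / y) Filter.atTop (nhds r) :=
      tendsto_nat_floor_mul_div_atTop hr
    have h2 : Filter.Tendsto (fun j : ℕ => (2:ℝ)^j) Filter.atTop Filter.atTop :=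
      tendsto_pow_atTop_atTop_of_one_lt one_lt_two
    exact h1.comp h2
  exact ge_of_tendsto htend (Filter.Eventually.of_forall fun j => dyadic_smul_nonneg hx _ j)

lemma smul_le_smul_vec {r : ℝ} (hr : 0 ≤ r) {a b : X} (hab : a ≤ b) : r • a ≤ r • b := by
  have := real_smul_nonneg hr (sub_nonneg.mpr hab)
  rwa [smul_sub, sub_nonneg] at this

lemma smul_le_abs_smul_abs (r : ℝ) (y : X) : r • y ≤ |r| • |y| := by
  rcases le_or_gt 0 r with hr | hr
  · rw [abs_of_nonneg hr]
    exact smul_le_smul_vec hr (le_abs_self y)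
  · rw [abs_of_neg hr]
    have h1 : (-r) • (-y) ≤ (-r) • |y| := smul_le_smul_vec (by linarith) (neg_le_abs y)
    simpa [smul_neg, neg_smul] using h1

lemma abs_smul_vec (r : ℝ) (y : X) : |r • y| = |r| • |y| := by
  apply le_antisymm
  · rw [abs_le']
    constructor
    · exact smul_le_abs_smul_abs r y
    · have := smul_le_abs_smul_abs (-r) y
      rwa [neg_smul, abs_neg] at this
  · rcases eq_or_ne r 0 with h | h
    · simp [h]
    · have h1 : |y| ≤ |r|⁻¹ • |r • y| := by
        have h2 : |r⁻¹ • (r • y)| ≤ |r⁻¹| • |r • y| := by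
          rw [abs_le']
          exact ⟨smul_le_abs_smul_abs _ _, by
            have := smul_le_abs_smul_abs (-(r⁻¹)) (r • y)
            rwa [neg_smul, abs_neg] at this⟩
        rw [smul_smul, inv_mul_cancel₀ h, one_smul, abs_inv] at h2
        exact h2
      have h3 : |r| • |y| ≤ |r| • (|r|⁻¹ • |r • y|) := smul_le_smul_vec (abs_nonneg r) h1
      rwa [smul_smul, mul_inv_cancel₀ (by simpa using h), one_smul] at h3

lemma abs_sum_le_sum_abs' {m : ℕ} (f : Fin m → X) : |∑ i, f i| ≤ ∑ i, |f i| := by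
  induction m with
  | zero => simp
  | succ m ih =>
    rw [Fin.sum_univ_succ, Fin.sum_univ_succ]
    exact (abs_add_le _ _).trans (add_le_add_right (ih fun i => f i.succ) _)

lemma sum_abs_le_of_signs {m : ℕ} (y : Fin m → X) (z : X)
    (h : ∀ σ : Fin m → Bool, ∑ i, (if σ i then y i else -(y i)) ≤ z) :
    ∑ i, |y i| ≤ z := by
  induction m generalizing z with
  | zero => simpa using h (fun _ => true)
  | succ m ih =>
    have key : ∀ σ' : Fin m → Bool,
        ∑ i, (if σ' i then y i.succ else -(y i.succ)) ≤ z - |y 0| := by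
      intro σ'
      have htrue := h (Fin.cons true σ')
      have hfalse := h (Fin.cons false σ')
      rw [Fin.sum_univ_succ] at htrue hfalse
      simp only [Fin.cons_zero, Fin.cons_succ, if_true] at htrue hfalse
      set A : X := ∑ i, (if σ' i then y i.succ else -(y i.succ)) with hA
      have h1 : y 0 ≤ z - A := le_sub_iff_add_le.mpr (by simpa using htrue)
      have h2 : -(y 0) ≤ z - A := le_sub_iff_add_le.mpr (by simpa using hfalse)
      have habs : |y 0| ≤ z - A := abs_le'.mpr ⟨h1, h2⟩
      exact le_sub_iff_add_le'.mpr (le_sub_iff_add_le.mp habs)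
    have hsum := ih (fun i => y i.succ) (z - |y 0|) key
    rw [Fin.sum_univ_succ]
    have := add_le_add_right hsum (|y 0|)
    simpa using this



set_option maxHeartbeats 1600000 in
/-- **Upper ℓ_r-estimate for moduli of ℓ_p-sequences (2 < p < ∞).** If `(x_n)` is a sequence
in a Banach lattice `X` equivalent to the canonical basis of `ℓ_p`, then the sequence of
absolute values `(|x_n|)` satisfies an upper `ℓ_r`-estimate, where `1/r = 1/2 + 1/p`. -/
theorem abs_of_lp_sequence_upper_estimate (p r : ℝ) (hp : 2 < p) (hr : 1 / r = 1 / 2 + 1 / p)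
    (X : Type) [NormedAddCommGroup X] [Lattice X] [HasSolidNorm X]
    [IsOrderedAddMonoid X] [NormedSpace ℝ X] [CompleteSpace X]
    (x : ℕ → X) (c C : ℝ) (hc : 0 < c) (hC : 0 < C)
    (hlow : ∀ (m : ℕ) (lam : Fin m → ℝ),
      c * (∑ i, |lam i| ^ p) ^ (1 / p) ≤ ‖∑ i, lam i • x (i : ℕ)‖)
    (hupp : ∀ (m : ℕ) (lam : Fin m → ℝ),
      ‖∑ i, lam i • x (i : ℕ)‖ ≤ C * (∑ i, |lam i| ^ p) ^ (1 / p)) :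
    ∃ K : ℝ, 0 < K ∧ ∀ (m : ℕ) (lam : Fin m → ℝ),
      ‖∑ i, lam i • |x (i : ℕ)|‖ ≤ K * (∑ i, |lam i| ^ r) ^ (1 / r) := by
  classical
  have hp0 : (0:ℝ) < p := by linarith
  have hpne : p ≠ 0 := ne_of_gt hp0
  have hrpos : 0 < r := by
    have h1 : 0 < 1/r := by rw [hr]; positivity
    exact one_div_pos.mp h1
  have hrne : r ≠ 0 := ne_of_gt hrpos
  refine ⟨Real.sqrt 3 * C, by positivity, ?_⟩
  intro m lam
  set A : ℝ := ∑ i, |lam i| ^ r with hA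
  have hA0 : 0 ≤ A := Finset.sum_nonneg fun i _ => Real.rpow_nonneg (abs_nonneg _) r
  rcases eq_or_lt_of_le hA0 with hAz | hApos
  · -- all coefficients vanish
    have hall : ∀ i : Fin m, lam i = 0 := by
      intro i
      have hterm : |lam i| ^ r = 0 :=
        (Finset.sum_eq_zero_iff_of_nonneg
          (fun i _ => Real.rpow_nonneg (abs_nonneg _) r)).mp hAz.symm i (Finset.mem_univ i)
      have := (Real.rpow_eq_zero (abs_nonneg _) hrne).mp hterm
      exact abs_eq_zero.mp this
    have hzero : ∑ i, lam i • |x (i:ℕ)| = 0 :=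
      Finset.sum_eq_zero fun i _ => by rw [hall i, zero_smul]
    rw [hzero, norm_zero, ← hAz, Real.zero_rpow (by positivity : (1:ℝ)/r ≠ 0), mul_zero]
  · set β : Fin m → ℝ := fun i => |lam i| ^ (r/2) with hβ
    set μ : Fin m → ℝ := fun i => |lam i| ^ (r/p) with hμ
    have hμ0 : ∀ i, 0 ≤ μ i := fun i => Real.rpow_nonneg (abs_nonneg _) _
    have hβ0 : ∀ i, 0 ≤ β i := fun i => Real.rpow_nonneg (abs_nonneg _) _
    have harith : r/2 + r/p = 1 := by
      have h1 : r * (1/r) = r * (1/2 + 1/p) := by rw [hr]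
      rw [mul_one_div_cancel hrne] at h1
      field_simp at h1 ⊢
      linarith
    have hβμ : ∀ i, β i * μ i = |lam i| := by
      intro i
      rcases eq_or_ne (lam i) 0 with h | h
      · simp only [hβ, hμ, h, abs_zero,
          Real.zero_rpow (div_ne_zero hrne two_ne_zero),
          Real.zero_rpow (div_ne_zero hrne hpne), mul_zero]
      · have habs : 0 < |lam i| := abs_pos.mpr h
        rw [show β i = |lam i| ^ (r/2) from rfl, show μ i = |lam i| ^ (r/p) from rfl,
          ← Real.rpow_add habs, harith, Real.rpow_one]
    have hβsq : ∀ i, (β i)^2 = |lam i| ^ r := by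
      intro i
      rw [show β i = |lam i| ^ (r/2) from rfl,
        ← Real.rpow_natCast (|lam i| ^ (r/2)) 2, ← Real.rpow_mul (abs_nonneg _)]
      norm_num
    have hμp : ∀ i, (μ i) ^ p = |lam i| ^ r := by
      intro i
      rw [show μ i = |lam i| ^ (r/p) from rfl, ← Real.rpow_mul (abs_nonneg _),
        div_mul_cancel₀ r hpne]
    have hbsgn_abs : ∀ b : Bool, |bsgn b| = 1 := by intro b; cases b <;> simp [bsgn]
    set Mv : (Fin m → Bool) → X := fun ε => ∑ j, (bsgn (ε j) * μ j) • x (j : ℕ) with hMv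
    have hMnorm : ∀ ε, ‖Mv ε‖ ≤ C * A ^ (1/p) := by
      intro ε
      refine (hupp m (fun j => bsgn (ε j) * μ j)).trans (le_of_eq ?_)
      congr 2
      · apply Finset.sum_congr rfl; intro j _
        rw [abs_mul, hbsgn_abs, one_mul, abs_of_nonneg (hμ0 j), hμp j]
    set cc : ℝ := Real.sqrt 3 * Real.sqrt A * ((2:ℝ)^m)⁻¹ with hcc
    have hcc0 : 0 ≤ cc := by positivity
    set z : X := ∑ ε : Fin m → Bool, cc • |Mv ε| with hz
    have hsign : ∀ σ : Fin m → Bool,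
        ∑ i, (if σ i then lam i • x (i:ℕ) else -(lam i • x (i:ℕ))) ≤ z := by
      intro σ
      have hscal : ∀ t : Fin m → ℝ, ∑ i, (bsgn (σ i) * lam i) * t i
          ≤ ∑ ε : Fin m → Bool, cc * |∑ j, (bsgn (ε j) * μ j) * t j| := by
        intro t
        have step1 : ∑ i, (bsgn (σ i) * lam i) * t i ≤ ∑ i, β i * (μ i * |t i|) := by
          apply Finset.sum_le_sum; intro i _
          have h1 : (bsgn (σ i) * lam i) * t i ≤ |(bsgn (σ i) * lam i) * t i| := le_abs_self _
          have h2 : |(bsgn (σ i) * lam i) * t i| = β i * (μ i * |t i|) := by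
            rw [abs_mul, abs_mul, hbsgn_abs, one_mul, ← hβμ i, mul_assoc]
          rwa [h2] at h1
        have hnn : 0 ≤ ∑ i, β i * (μ i * |t i|) :=
          Finset.sum_nonneg fun i _ => mul_nonneg (hβ0 i) (mul_nonneg (hμ0 i) (abs_nonneg _))
        have step2 : ∑ i, β i * (μ i * |t i|)
            ≤ Real.sqrt A * Real.sqrt (∑ i, (μ i * t i)^2) := by
          have csq := Finset.sum_mul_sq_le_sq_mul_sq Finset.univ β (fun i => μ i * |t i|)
          have sumA : ∑ i, (β i)^2 = A := Finset.sum_congr rfl fun i _ => hβsq i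
          have habs2 : ∑ i, (μ i * |t i|)^2 = ∑ i, (μ i * t i)^2 :=
            Finset.sum_congr rfl fun i _ => by rw [mul_pow, mul_pow, sq_abs]
          calc ∑ i, β i * (μ i * |t i|)
              = Real.sqrt ((∑ i, β i * (μ i * |t i|))^2) := (Real.sqrt_sq hnn).symm
            _ ≤ Real.sqrt (A * ∑ i, (μ i * t i)^2) := by
                apply Real.sqrt_le_sqrt
                rw [← sumA, ← habs2]
                exact csq
            _ = Real.sqrt A * Real.sqrt (∑ i, (μ i * t i)^2) := Real.sqrt_mul hA0 _
        have step3 := khintchine m (fun j => μ j * t j)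
        calc ∑ i, (bsgn (σ i) * lam i) * t i
            ≤ ∑ i, β i * (μ i * |t i|) := step1
          _ ≤ Real.sqrt A * Real.sqrt (∑ i, (μ i * t i)^2) := step2
          _ ≤ Real.sqrt A * (Real.sqrt 3 * ((2:ℝ)^m)⁻¹
                * ∑ ε : Fin m → Bool, |∑ j, bsgn (ε j) * (μ j * t j)|) :=
              mul_le_mul_of_nonneg_left step3 (Real.sqrt_nonneg A)
          _ = ∑ ε : Fin m → Bool, cc * |∑ j, (bsgn (ε j) * μ j) * t j| := by
              rw [hcc]
              rw [Finset.mul_sum, Finset.mul_sum]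
              apply Finset.sum_congr rfl
              intro ε _
              have hsum : ∑ j, (bsgn (ε j) * μ j) * t j = ∑ j, bsgn (ε j) * (μ j * t j) :=
                Finset.sum_congr rfl fun j _ => by ring
              rw [hsum]
              ring
      obtain ⟨a, ha_bd, ha_eq⟩ := decomp_lemma (ι := Fin m → Bool) (m := m)
        (fun ε j => bsgn (ε j) * μ j) (fun _ => cc)
        (fun _ => hcc0) (fun i => bsgn (σ i) * lam i) (fun t => hscal t)
      have hXeq : ∑ i, (if σ i then lam i • x (i:ℕ) else -(lam i • x (i:ℕ)))
          = ∑ ε : Fin m → Bool, a ε • Mv ε := by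
        have h1 : ∀ i : Fin m, (if σ i then lam i • x (i:ℕ) else -(lam i • x (i:ℕ)))
            = (bsgn (σ i) * lam i) • x (i:ℕ) := by
          intro i
          cases hσ : σ i <;> simp [bsgn, hσ, neg_smul]
        rw [Finset.sum_congr rfl fun i _ => h1 i]
        calc ∑ i, (bsgn (σ i) * lam i) • x (i:ℕ)
            = ∑ i : Fin m, (∑ ε : Fin m → Bool, a ε * (bsgn (ε i) * μ i)) • x (i:ℕ) := by
              apply Finset.sum_congr rfl; intro i _
              rw [← ha_eq i]
          _ = ∑ i : Fin m, ∑ ε : Fin m → Bool, (a ε * (bsgn (ε i) * μ i)) • x (i:ℕ) := by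
              apply Finset.sum_congr rfl; intro i _
              rw [Finset.sum_smul]
          _ = ∑ ε : Fin m → Bool, ∑ i : Fin m, (a ε * (bsgn (ε i) * μ i)) • x (i:ℕ) :=
              Finset.sum_comm
          _ = ∑ ε : Fin m → Bool, a ε • Mv ε := by
              apply Finset.sum_congr rfl; intro ε _
              rw [show Mv ε = ∑ j, (bsgn (ε j) * μ j) • x (j : ℕ) from rfl, Finset.smul_sum]
              apply Finset.sum_congr rfl; intro i _
              rw [mul_smul]
      rw [hXeq, hz]
      apply Finset.sum_le_sum; intro ε _
      refine le_trans (smul_le_abs_smul_abs (a ε) (Mv ε)) ?_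
      have hd : 0 ≤ (cc - |a ε|) • |Mv ε| :=
        real_smul_nonneg (by linarith [ha_bd ε]) (abs_nonneg (Mv ε))
      rw [sub_smul, sub_nonneg] at hd
      exact hd
    set w : X := ∑ i, lam i • |x (i:ℕ)| with hw
    have hterm_abs : ∀ i : Fin m, |lam i • (|x (i:ℕ)|)| = |lam i • x (i:ℕ)| := by
      intro i
      rw [abs_smul_vec, abs_smul_vec, abs_abs]
    have habs_le : |w| ≤ z := by
      refine le_trans ?_ (sum_abs_le_of_signs (fun i => lam i • x (i:ℕ)) z hsign)
      rw [hw]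
      refine le_trans (abs_sum_le_sum_abs' _) ?_
      exact le_of_eq (Finset.sum_congr rfl fun i _ => hterm_abs i)
    have hznn : 0 ≤ z := le_trans (abs_nonneg w) habs_le
    have hnorm : ‖w‖ ≤ ‖z‖ :=
      HasSolidNorm.solid (by rwa [abs_of_nonneg hznn])
    have hznorm : ‖z‖ ≤ 2^m * (cc * (C * A ^ (1/p))) := by
      rw [hz]
      refine (norm_sum_le _ _).trans ?_
      have hterm : ∀ ε : Fin m → Bool, ‖cc • |Mv ε|‖ ≤ cc * (C * A^(1/p)) := by
        intro ε
        rw [norm_smul, Real.norm_eq_abs, abs_of_nonneg hcc0, norm_abs_eq_norm]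
        exact mul_le_mul_of_nonneg_left (hMnorm ε) hcc0
      refine (Finset.sum_le_sum fun ε _ => hterm ε).trans (le_of_eq ?_)
      rw [Finset.sum_const, Finset.card_univ, Fintype.card_fun, Fintype.card_bool,
        Fintype.card_fin, nsmul_eq_mul]
      push_cast
      ring
    have hfinal : 2^m * (cc * (C * A ^ (1/p))) = Real.sqrt 3 * C * A ^ (1/r) := by
      rw [hcc]
      have h2m : ((2:ℝ)^m) ≠ 0 := by positivity
      have hsqrtA : Real.sqrt A = A ^ ((1:ℝ)/2) := Real.sqrt_eq_rpow A
      calc (2:ℝ)^m * (Real.sqrt 3 * Real.sqrt A * ((2:ℝ)^m)⁻¹ * (C * A^((1:ℝ)/p)))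
          = Real.sqrt 3 * C * (A^((1:ℝ)/2) * A^((1:ℝ)/p)) := by
            rw [hsqrtA]; field_simp
        _ = Real.sqrt 3 * C * A ^ ((1:ℝ)/r) := by
            rw [← Real.rpow_add hApos, ← hr]
    exact hnorm.trans (hznorm.trans (le_of_eq hfinal))
end
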